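/- Let d be a positive integer, A ⊆ ℝ^d an open set, F : A → ℝ^d continuous, and V : A → ℝ continuously differentiable. Let θ̃ < θ be reals and c > 0 be such that ⟨∇V(x), F(x)⟩ ≤ 0 for all x ∈ A with V(x) ≤ θ, and ⟨∇V(x), F(x)⟩ ≤ −c for all x ∈ A with θ̃ ≤ V(x) ≤ θ. Let t₀ ∈ ℝ and let x : [t₀, ∞) → A be continuously differentiable with x'(t) = F(x(t)) for all t ≥ t₀ and V(x(t₀)) ≤ θ. Then V(x(t)) ≤ θ̃ for all t ≥ t₀ + (θ − θ̃)/c; i.e., the trajectory enters the sublevel set {x ∈ A : V(x) ≤ θ̃} within time (θ − θ̃)/c and remains in it thereafter. -/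

import Mathlib

open Set Filter Topology

/-- Barrier lemma: if `g` has a negative derivative whenever it touches the level `L`
(for `t ≥ a`), and starts below `L`, then it stays below `L`. -/
lemma barrier_lemma (g g' : ℝ → ℝ) (a L : ℝ)
    (hg : ∀ t, a ≤ t → HasDerivAt g (g' t) t)
    (hneg : ∀ t, a ≤ t → g t = L → g' t < 0)
    (ha : g a ≤ L) : ∀ t, a ≤ t → g t ≤ L := by
  intro t₁ hat
  by_contra hgt
  push_neg at hgt
  have hcont : ContinuousOn g (Icc a t₁) := fun t ht =>
    ((hg t ht.1).continuousAt).continuousWithinAt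
  have hSne : (Icc a t₁ ∩ g ⁻¹' Iic L).Nonempty := ⟨a, ⟨le_refl a, hat⟩, ha⟩
  have hSbdd : BddAbove (Icc a t₁ ∩ g ⁻¹' Iic L) := ⟨t₁, fun t ht => ht.1.2⟩
  have hSclosed : IsClosed (Icc a t₁ ∩ g ⁻¹' Iic L) :=
    hcont.preimage_isClosed_of_isClosed isClosed_Icc isClosed_Iic
  obtain ⟨⟨has, hst₁⟩, hsle⟩ :
      sSup (Icc a t₁ ∩ g ⁻¹' Iic L) ∈ Icc a t₁ ∩ g ⁻¹' Iic L :=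
    hSclosed.csSup_mem hSne hSbdd
  set s := sSup (Icc a t₁ ∩ g ⁻¹' Iic L) with hs
  have hsle : g s ≤ L := hsle
  have hslt : s < t₁ := lt_of_le_of_ne hst₁ (by
    intro h; rw [h] at hsle; exact absurd hsle (not_le.mpr hgt))
  have hgtS : ∀ t, s < t → t ≤ t₁ → L < g t := by
    intro t hst ht1
    by_contra h
    push_neg at h
    exact absurd (le_csSup hSbdd ⟨⟨has.trans hst.le, ht1⟩, h⟩) (not_le.mpr hst)
  -- g s = L
  have hgs : g s = L := by
    rcases lt_or_eq_of_le hsle with hlt | heq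
    · exfalso
      have hcs : ContinuousAt g s := (hg s has).continuousAt
      have h1 : ∀ᶠ t in 𝓝[>] s, g t < L :=
        (hcs.eventually_lt_const hlt).filter_mono nhdsWithin_le_nhds
      have h2 : Ioc s t₁ ∈ 𝓝[>] s := Ioc_mem_nhdsGT_of_mem ⟨le_refl s, hslt⟩
      rcases (h1.and (eventually_of_mem h2 (fun t ht => ht))).exists with ⟨t, hlt', ht⟩
      exact absurd (hgtS t ht.1 ht.2) (not_lt.mpr hlt'.le)
    · exact heq
  have hderiv : g' s < 0 := hneg s has hgs
  have hslope : Tendsto (slope g s) (𝓝[≠] s) (𝓝 (g' s)) :=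
    hasDerivAt_iff_tendsto_slope.mp (hg s has)
  have h1 : ∀ᶠ t in 𝓝[≠] s, slope g s t < 0 := hslope.eventually_lt_const hderiv
  have h1' : ∀ᶠ t in 𝓝[>] s, slope g s t < 0 :=
    h1.filter_mono (nhdsWithin_mono s fun t ht => ne_of_gt ht)
  have h2 : Ioc s t₁ ∈ 𝓝[>] s := Ioc_mem_nhdsGT_of_mem ⟨le_refl s, hslt⟩
  rcases (h1'.and (eventually_of_mem h2 (fun t ht => ht))).exists with ⟨t, hlt', ht⟩
  have hpos : 0 < t - s := sub_pos.mpr ht.1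
  have hneg' : g t - g s < 0 := by
    rw [slope_def_field, div_neg_iff] at hlt'
    rcases hlt' with ⟨_, h⟩ | ⟨h, _⟩
    · linarith
    · linarith [sub_neg.mp h]
  have : g t < L := by linarith [hgs]
  exact absurd (hgtS t ht.1 ht.2) (not_lt.mpr this.le)

theorem stmt7 (d : ℕ) (hd : 0 < d) (A : Set (EuclideanSpace ℝ (Fin d))) (hA : IsOpen A)
    (F : EuclideanSpace ℝ (Fin d) → EuclideanSpace ℝ (Fin d)) (hF : ContinuousOn F A)
    (V : EuclideanSpace ℝ (Fin d) → ℝ) (hV : ContDiffOn ℝ 1 V A)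
    (θt θ c : ℝ) (hθ : θt < θ) (hc : 0 < c)
    (hdec : ∀ p ∈ A, V p ≤ θ → (inner ℝ (gradient V p) (F p) : ℝ) ≤ 0)
    (hdec' : ∀ p ∈ A, θt ≤ V p → V p ≤ θ → (inner ℝ (gradient V p) (F p) : ℝ) ≤ -c)
    (t₀ : ℝ) (x : ℝ → EuclideanSpace ℝ (Fin d))
    (hxA : ∀ t, t₀ ≤ t → x t ∈ A)
    (hx' : ∀ t, t₀ ≤ t → HasDerivAt x (F (x t)) t)
    (hx0 : V (x t₀) ≤ θ) :
    ∀ t : ℝ, t₀ + (θ - θt) / c ≤ t → V (x t) ≤ θt := by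
  have hderiv : ∀ t, t₀ ≤ t →
      HasDerivAt (fun t => V (x t)) ((inner ℝ (gradient V (x t)) (F (x t)) : ℝ)) t := by
    intro t ht
    have hmem : x t ∈ A := hxA t ht
    have hdiff : DifferentiableAt ℝ V (x t) :=
      (hV.contDiffAt (hA.mem_nhds hmem)).differentiableAt one_ne_zero
    have hfd : HasFDerivAt V ((InnerProductSpace.toDual ℝ _) (gradient V (x t))) (x t) :=
      hdiff.hasGradientAt.hasFDerivAt
    have := hfd.comp_hasDerivAt t (hx' t ht)
    simpa [InnerProductSpace.toDual_apply_apply, Function.comp_def] using this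
  -- step 2: V ∘ x stays ≤ θ
  have step2 : ∀ t, t₀ ≤ t → V (x t) ≤ θ := by
    refine barrier_lemma _ _ t₀ θ hderiv ?_ hx0
    intro t ht heq
    have : (inner ℝ (gradient V (x t)) (F (x t)) : ℝ) ≤ -c :=
      hdec' (x t) (hxA t ht) (by rw [heq]; exact hθ.le) (le_of_eq heq)
    linarith
  have hTt₀ : t₀ < t₀ + (θ - θt) / c := by
    have : 0 < (θ - θt) / c := div_pos (by linarith) hc
    linarith
  -- step 4: there is t₁ ∈ [t₀, T] with V (x t₁) ≤ θt
  have step4 : ∃ t₁, t₀ ≤ t₁ ∧ t₁ ≤ t₀ + (θ - θt) / c ∧ V (x t₁) ≤ θt := by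
    by_contra h
    push_neg at h
    have hgt : ∀ t ∈ Icc t₀ (t₀ + (θ - θt) / c), θt < V (x t) := fun t ht => h t ht.1 ht.2
    have hhderiv : ∀ t ∈ Icc t₀ (t₀ + (θ - θt) / c),
        HasDerivAt (fun t => V (x t) + c * t)
          ((inner ℝ (gradient V (x t)) (F (x t)) : ℝ) + c) t := by
      intro t ht
      exact (hderiv t ht.1).add (by simpa using (hasDerivAt_id t).const_mul c)
    have hanti : AntitoneOn (fun t => V (x t) + c * t) (Icc t₀ (t₀ + (θ - θt) / c)) := by
      apply antitoneOn_of_deriv_nonpos (convex_Icc _ _)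
      · exact fun t ht => ((hhderiv t ht).continuousAt).continuousWithinAt
      · intro t ht
        rw [interior_Icc] at ht
        exact (hhderiv t ⟨ht.1.le, ht.2.le⟩).differentiableAt.differentiableWithinAt
      · intro t ht
        rw [interior_Icc] at ht
        have htIcc : t ∈ Icc t₀ (t₀ + (θ - θt) / c) := ⟨ht.1.le, ht.2.le⟩
        rw [(hhderiv t htIcc).deriv]
        have : (inner ℝ (gradient V (x t)) (F (x t)) : ℝ) ≤ -c :=
          hdec' (x t) (hxA t htIcc.1) (hgt t htIcc).le (step2 t htIcc.1)
        linarith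
    have hle : V (x (t₀ + (θ - θt) / c)) + c * (t₀ + (θ - θt) / c) ≤ V (x t₀) + c * t₀ :=
      hanti ⟨le_refl t₀, hTt₀.le⟩ ⟨hTt₀.le, le_refl _⟩ hTt₀.le
    have hcT : c * ((θ - θt) / c) = θ - θt := mul_div_cancel₀ _ (ne_of_gt hc)
    have hend : V (x (t₀ + (θ - θt) / c)) ≤ θt := by nlinarith [hx0]
    exact absurd (hgt _ ⟨hTt₀.le, le_refl _⟩) (not_lt.mpr hend)
  obtain ⟨t₁, ht₀t₁, ht₁T, hgt₁⟩ := step4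
  -- step 3: once below θt, stays below
  have step3 : ∀ t, t₁ ≤ t → V (x t) ≤ θt := by
    refine barrier_lemma _ _ t₁ θt (fun t ht => hderiv t (ht₀t₁.trans ht)) ?_ hgt₁
    intro t ht heq
    have ht' : t₀ ≤ t := ht₀t₁.trans ht
    have : (inner ℝ (gradient V (x t)) (F (x t)) : ℝ) ≤ -c :=
      hdec' (x t) (hxA t ht') (le_of_eq heq.symm) (step2 t ht')
    linarith
  intro t ht
  exact step3 t (ht₁T.trans ht)
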